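/- Let R be a semiring, V a free R-module with basis (ε_i)_{i∈I}, and q: V → R a quadratic form (i.e., q(cx) = c²q(x) and there exists a symmetric bilinear form b with q(x+y) = q(x)+q(y)+b(x,y)). Then q admits an expansion: a bilinear form B: V × V → R with q(x) = B(x,x) for all x, and consequently q admits a balanced companion, i.e., a symmetric bilinear companion b̃ with b̃(x,x) = 2q(x) for all x ∈ V. -/

import Mathlib

/-- A (not necessarily symmetric) `R`-bilinear form on `V`. -/
def IsBilin {R : Type*} [CommSemiring R] {V : Type*} [AddCommMonoid V] [Module R V]
    (b : V → V → R) : Prop :=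
  (∀ x y z : V, b (x + y) z = b x z + b y z) ∧
  (∀ x y z : V, b x (y + z) = b x y + b x z) ∧
  (∀ (c : R) (x y : V), b (c • x) y = c * b x y) ∧
  (∀ (c : R) (x y : V), b x (c • y) = c * b x y)

/-- `b` is a (symmetric bilinear) companion of `q`. -/
def IsCompanion {R : Type*} [CommSemiring R] {V : Type*} [AddCommMonoid V] [Module R V]
    (q : V → R) (b : V → V → R) : Prop :=
  IsBilin b ∧ (∀ x y : V, b x y = b y x) ∧ ∀ x y : V, q (x + y) = q x + q y + b x y

/-- `q` is a quadratic form: homogeneous of degree 2 and admitting some companion. -/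
def IsQuadForm {R : Type*} [CommSemiring R] {V : Type*} [AddCommMonoid V] [Module R V]
    (q : V → R) : Prop :=
  (∀ (c : R) (x : V), q (c • x) = c ^ 2 * q x) ∧ ∃ b, IsCompanion q b

variable {R : Type*} [CommSemiring R] {V : Type*} [AddCommMonoid V] [Module R V]

/-- Over a free module, every quadratic form admits an expansion and hence a
balanced companion. -/
theorem stmt0 {I : Type*} (ε : Module.Basis I R V) (q : V → R) (hq : IsQuadForm q) :
    (∃ B : V → V → R, IsBilin B ∧ ∀ x : V, q x = B x x) ∧
    (∃ bb : V → V → R, IsCompanion q bb ∧ ∀ x : V, bb x x = 2 * q x) := by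
  classical
  obtain ⟨hsmul, b, ⟨hb1, hb2, hb3, hb4⟩, hbsymm, hbcomp⟩ := hq
  have hq0 : q 0 = 0 := by simpa using hsmul 0 0
  letI : LinearOrder I := IsWellOrder.linearOrder WellOrderingRel
  set bL : V →ₗ[R] V →ₗ[R] R := LinearMap.mk₂ R b hb1 hb3 hb2 hb4 with hbL
  set BL : V →ₗ[R] V →ₗ[R] R := ε.constr (S := R) fun i => ε.constr (S := R) fun j =>
    if i = j then q (ε i) else if i < j then b (ε i) (ε j) else 0 with hBL
  have hBLb : ∀ i j, BL (ε i) (ε j) =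
      if i = j then q (ε i) else if i < j then b (ε i) (ε j) else 0 := by
    intro i j; simp [hBL]
  have qsum : ∀ (s : Finset I) (f : I → V), q (∑ i ∈ s, f i) = (∑ i ∈ s, q (f i)) +
      ∑ ij ∈ s.sym2 with ¬ ij.IsDiag,
        Sym2.lift ⟨fun i j => b (f i) (f j), fun _ _ => hbsymm _ _⟩ ij := by
    intro s f
    induction s using Finset.cons_induction with
    | empty => simp [hq0]
    | cons a s ha ih =>
      have hbs : b (f a) (∑ i ∈ s, f i) = ∑ i ∈ s, b (f a) (f i) := by
        exact map_sum (bL (f a)) f s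
      rw [Finset.sum_cons, hbcomp, ih, hbs]
      simp_rw [Finset.sum_cons, Finset.sym2_cons, Finset.sum_filter, Finset.sum_disjUnion,
        Finset.sum_map, Finset.sum_cons, Sym2.mkEmbedding_apply, Sym2.isDiag_iff_proj_eq,
        not_true, if_false, zero_add, Sym2.lift_mk]
      have he : (∑ x ∈ s, if ¬a = x then b (f a) (f x) else 0) = ∑ i ∈ s, b (f a) (f i) :=
        Finset.sum_congr rfl fun i hi => if_pos (by rintro rfl; exact ha hi)
      rw [he]
      ring
  have key : ∀ x : V, BL x x = q x := by
    intro x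
    have hx : x = ∑ i ∈ (ε.repr x).support, ε.repr x i • ε i := by
      conv_lhs => rw [← ε.linearCombination_repr x]
      rw [Finsupp.linearCombination_apply, Finsupp.sum]
    conv_lhs => rw [hx]
    conv_rhs => rw [hx]
    rw [qsum]
    simp_rw [LinearMap.map_sum₂, map_sum, LinearMap.map_smul₂, _root_.map_smul, hBLb,
      smul_ite, smul_zero, ← Finset.sum_product', ← Finset.diag_union_offDiag,
      Finset.sum_union (Finset.disjoint_diag_offDiag _), Finset.sum_diag, if_true]
    rw [Finset.sum_ite_of_false]
    · simp_rw [hsmul, Finset.sum_sym2_filter_not_isDiag, Sym2.lift_mk, hb3, hb4,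
        smul_eq_mul, pow_two, ← Finset.sum_filter, mul_assoc]
    · intro p hp
      rw [Finset.mem_offDiag] at hp
      simpa using hp.2.2
  constructor
  · exact ⟨fun x y => BL x y, ⟨fun x y z => by simp, fun x y z => by simp,
      fun c x y => by simp, fun c x y => by simp⟩, fun x => (key x).symm⟩
  · refine ⟨fun x y => BL x y + BL y x, ⟨⟨fun x y z => by simp; ring, fun x y z => by simp; ring,
      fun c x y => by simp; ring, fun c x y => by simp; ring⟩,
      fun x y => by ring, fun x y => ?_⟩, fun x => ?_⟩
    · rw [← key (x + y), ← key x, ← key y]; simp; ring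
    · rw [← key x]; ring
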